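/- Assume G is abelian. Let A be a discrete connection form with D-type domain U, s : V → P a section over V ⊆ B, 𝔤 an abelian group written additively, exp : 𝔤 → G a homomorphism, W ⊆ V'' a subset, and ℓA : W → 𝔤 a map with exp(ℓA(m₀,m₁)) = A_s(m₀,m₁) for all (m₀,m₁) ∈ W. Let N ≥ 2 and m_• = (m₀,…,m_N) be a discrete loop in B (m_N = m₀) such that all pairs among (m₀, m_k, m_{k+1}) lie in W for every k = 0,…,N−1. Then the discrete holonomy phase satisfies HP(m_•,q̄) = exp(−Σ_{k=1}^{N} ℓA(m_{k-1},m_k)) for every q̄ ∈ π⁻¹(m₀). -/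
import Mathlib


/-- for an abelian structure group `G`, exponential homomorphism
`exp : 𝔤 → G`, and a logarithm `ℓA` of the local expression `A_s` of a discrete
connection form `A` (i.e. `exp(ℓA(m₀,m₁)) = A_s(m₀,m₁) = A(s(m₀),s(m₁))` on
`W ⊆ V''`), the discrete holonomy phase around a discrete loop `m_•` all of
whose triples `(m₀,m_k,m_{k+1})` have all their pairs in `W` satisfies
`HP(m_•,q̄) = κ(q̄,q_N) = exp(−Σ_{k=1}^{N} ℓA(m_{k-1},m_k))` for every
`q̄ ∈ π⁻¹(m₀)`. -/
theorem discrete_holonomy_phase_log_connection_formula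
    {G : Type*} [CommGroup G] {P : Type*} [MulAction G P] {B : Type*}
    (π : P → B)
    (hfree : ∀ (g : G) (q : P), g • q = q → g = 1)
    (hπ : ∀ q₀ q₁ : P, π q₀ = π q₁ ↔ ∃ g : G, g • q₀ = q₁)
    (κ : P → P → G)
    (hκ : ∀ q₀ q₁ : P, π q₀ = π q₁ → κ q₀ q₁ • q₀ = q₁)
    (U : Set (P × P))
    (hUinv : ∀ q₀ q₁ : P, (q₀, q₁) ∈ U → ∀ g₀ g₁ : G, (g₀ • q₀, g₁ • q₁) ∈ U)
    (hUvert : ∀ q₀ q₁ : P, π q₀ = π q₁ → (q₀, q₁) ∈ U)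
    (A : P → P → G)
    (hAid : ∀ q : P, A q q = 1)
    (hAequiv : ∀ q₀ q₁ : P, (q₀, q₁) ∈ U → ∀ g₀ g₁ : G,
      A (g₀ • q₀) (g₁ • q₁) = g₁ * A q₀ q₁ * g₀⁻¹)
    (V : Set B) (s : B → P) (hs : ∀ m ∈ V, π (s m) = m)
    (V'' : Set (B × B))
    (hV'' : V'' = {p : B × B | p.1 ∈ V ∧ p.2 ∈ V ∧ (s p.1, s p.2) ∈ U})
    -- the exponential homomorphism and the logarithm of `A_s`
    {𝔤 : Type*} [AddCommGroup 𝔤]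
    (exp : 𝔤 → G) (hexp : ∀ x y : 𝔤, exp (x + y) = exp x * exp y)
    (W : Set (B × B)) (hW : W ⊆ V'')
    (lA : B → B → 𝔤)
    (hlA : ∀ m₀ m₁ : B, (m₀, m₁) ∈ W → exp (lA m₀ m₁) = A (s m₀) (s m₁))
    -- a discrete loop `m_•` all of whose triples `(m₀, m_k, m_{k+1})` have
    -- all their pairs in `W`
    (N : ℕ) (hN : 2 ≤ N) (m : ℕ → B) (hloop : m N = m 0)
    (htr : ∀ k < N, ∀ x ∈ ({m 0, m k, m (k + 1)} : Set B),
      ∀ y ∈ ({m 0, m k, m (k + 1)} : Set B), (x, y) ∈ W)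
    -- an arbitrary starting point `q̄ ∈ π⁻¹(m₀)` and the discrete horizontal
    -- lift `q_•` of `m_•` (with respect to `h_A`) starting at `q̄`
    (qbar : P) (hqbar : π qbar = m 0)
    (q : ℕ → P) (hq0 : q 0 = qbar)
    (hlift : ∀ k < N, ∃ q' : P, π q' = m (k + 1) ∧ (q k, q') ∈ U ∧
      q (k + 1) = (A (q k) q')⁻¹ • q') :
    κ qbar (q N)
      = exp (-(∑ k ∈ Finset.range N, lA (m k) (m (k + 1)))) := by
  -- basic facts about exp
  have hexp0 : exp 0 = 1 := by
    have h := hexp 0 0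
    rw [add_zero] at h
    exact (left_eq_mul.mp h)
  have hexpneg : ∀ x : 𝔤, exp (-x) = (exp x)⁻¹ := by
    intro x
    have h := hexp x (-x)
    rw [add_neg_cancel, hexp0] at h
    exact (inv_eq_of_mul_eq_one_right h.symm).symm
  -- uniqueness of group elements acting
  have huniq : ∀ (g h : G) (p : P), g • p = h • p → g = h := by
    intro g h p hgh
    have h1 : (h⁻¹ * g) • p = p := by
      rw [mul_smul, hgh, inv_smul_smul]
    exact (inv_mul_eq_one.mp (hfree _ _ h1)).symm
  -- π is invariant
  have hπg : ∀ (g : G) (p : P), π (g • p) = π p := by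
    intro g p
    exact ((hπ p (g • p)).mpr ⟨g, rfl⟩).symm
  -- membership facts
  have hNpos : 0 < N := by omega
  have hWk : ∀ k < N, (m k, m (k + 1)) ∈ W := by
    intro k hk
    exact htr k hk (m k) (by simp) (m (k + 1)) (by simp)
  have hVk : ∀ k < N, m k ∈ V := by
    intro k hk
    have h := hW (htr k hk (m k) (by simp) (m k) (by simp))
    rw [hV''] at h
    exact h.1
  have hV0 : m 0 ∈ V := hVk 0 hNpos
  have hsm : ∀ k < N, π (s (m k)) = m k := fun k hk => hs _ (hVk k hk)
  have hsm0 : π (s (m 0)) = m 0 := hs _ hV0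
  set g₀ : G := κ (s (m 0)) qbar with hg₀
  have hg₀s : g₀ • s (m 0) = qbar := hκ _ _ (by rw [hsm0, hqbar])
  -- main induction
  have key : ∀ k, k ≤ N →
      q k = (g₀ * (exp (∑ j ∈ Finset.range k, lA (m j) (m (j + 1))))⁻¹) • s (m k) := by
    intro k
    induction k with
    | zero =>
      intro _
      simp [hq0, hexp0, ← hg₀s]
    | succ k ih =>
      intro hk1
      have hk : k < N := by omega
      have ihk := ih (le_of_lt hk)
      obtain ⟨q', hq'π, hq'U, hq'def⟩ := hlift k hk
      -- (s (m k), s (m (k+1))) ∈ U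
      have hUs : (s (m k), s (m (k + 1))) ∈ U := by
        have h := hW (hWk k hk)
        rw [hV''] at h
        exact h.2.2
      -- m (k+1) ∈ V
      have hVk1 : m (k + 1) ∈ V := by
        have h := hW (hWk k hk)
        rw [hV''] at h
        exact h.2.1
      set g' : G := κ (s (m (k + 1))) q' with hg'
      have hg's : g' • s (m (k + 1)) = q' := hκ _ _ (by rw [hs _ hVk1, hq'π])
      set c : G := g₀ * (exp (∑ j ∈ Finset.range k, lA (m j) (m (j + 1))))⁻¹ with hc
      have hA : A (q k) q' = g' * A (s (m k)) (s (m (k + 1))) * c⁻¹ := by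
        rw [ihk, ← hg's]
        exact hAequiv _ _ hUs c g'
      have hAs : A (s (m k)) (s (m (k + 1))) = exp (lA (m k) (m (k + 1))) :=
        (hlA _ _ (hWk k hk)).symm
      rw [hq'def, hA, hAs, ← hg's, ← mul_smul]
      congr 1
      have hgrp : ∀ a b d : G, (a * b * d⁻¹)⁻¹ * a = d * b⁻¹ := by
        intro a b d; group
      rw [hgrp, Finset.sum_range_succ, hexp, hc, mul_inv, mul_assoc]
  have hqN := key N le_rfl
  rw [hloop] at hqN
  -- compute κ qbar (q N)
  have hπeq : π qbar = π (q N) := by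
    rw [hqN, hπg, hsm0, hqbar]
  have hκN := hκ qbar (q N) hπeq
  have hfinal : (κ qbar (q N) * g₀) • s (m 0)
      = (g₀ * (exp (∑ j ∈ Finset.range N, lA (m j) (m (j + 1))))⁻¹) • s (m 0) := by
    rw [mul_smul, hg₀s, hκN, hqN]
  have := huniq _ _ _ hfinal
  rw [hexpneg]
  have hcomm : g₀ * (exp (∑ j ∈ Finset.range N, lA (m j) (m (j + 1))))⁻¹
      = (exp (∑ j ∈ Finset.range N, lA (m j) (m (j + 1))))⁻¹ * g₀ := mul_comm _ _
  rw [hcomm] at this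
  exact mul_right_cancel this
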